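/- If K ⊆ ℝ^n is compact and H is a finite-dimensional subspace of ℝ[x] containing a polynomial strictly positive on K, then every K-positive linear functional L : H → ℝ (i.e., L(p) ≥ 0 whenever p ∈ H is nonnegative on K) admits a finitely atomic representation: there exist m ≤ dim H points u_1, ..., u_m ∈ K and positive weights λ_1, ..., λ_m such that L(p) = Σ_i λ_i p(u_i) for all p ∈ H. -/

import Mathlib

open MvPolynomial Module

set_option maxHeartbeats 1000000
set_option synthInstance.maxHeartbeats 400000

private lemma sum_extend_emb {ι κ M : Type*} [Fintype ι] [Fintype κ] [AddCommMonoid M]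
    (e : ι ↪ κ) (F : ι → M) : ∑ j, Function.extend e F 0 j = ∑ i, F i := by
  classical
  rw [← Finset.sum_subset (Finset.subset_univ (Finset.univ.image e)) ?_]
  · rw [Finset.sum_image (fun x _ y _ h => e.injective h)]
    simp [e.injective.extend_apply]
  · intro j _ hj
    have h : ¬∃ i, e i = j := by simpa [Finset.mem_image, eq_comm] using hj
    simp [Function.extend_apply' _ _ _ h]

private lemma isCompact_convexHull_aux {d : ℕ} {s : Set (Fin d → ℝ)} (hs : IsCompact s) :
    IsCompact (convexHull ℝ s) := by
  classical
  rcases s.eq_empty_or_nonempty with rfl | ⟨z0, hz0⟩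
  · simp
  set g : (Fin (d + 1) → ℝ) × (Fin (d + 1) → (Fin d → ℝ)) → (Fin d → ℝ) :=
    fun q => ∑ i, q.1 i • q.2 i with hgdef
  have hgc : Continuous g := by
    apply continuous_finset_sum
    intro i _
    exact ((continuous_apply i).comp continuous_fst).smul
      ((continuous_apply i).comp continuous_snd)
  have hD : IsCompact ((stdSimplex ℝ (Fin (d + 1))) ×ˢ
      (Set.univ.pi fun _ : Fin (d + 1) => s)) :=
    (isCompact_stdSimplex ℝ _).prod (isCompact_univ_pi fun _ => hs)
  have himg : convexHull ℝ s =
      g '' ((stdSimplex ℝ (Fin (d + 1))) ×ˢ (Set.univ.pi fun _ : Fin (d + 1) => s)) := by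
    apply Set.Subset.antisymm
    · intro x hx
      obtain ⟨ι, hι, z, w, hrange, hAI, hwpos, hw1, hsum⟩ :=
        eq_pos_convex_span_of_mem_convexHull hx
      letI := hι
      have hcard : Fintype.card ι ≤ d + 1 := by
        cases isEmpty_or_nonempty ι
        · simp [Fintype.card_eq_zero]
        · have h1 := hAI.finrank_vectorSpan_add_one
          have h2 : finrank ℝ (vectorSpan ℝ (Set.range z)) ≤ d := by
            have := Submodule.finrank_le (vectorSpan ℝ (Set.range z))
            simpa [Module.finrank_fin_fun] using this
          omega
      obtain ⟨e⟩ : Nonempty (ι ↪ Fin (d + 1)) :=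
        Function.Embedding.nonempty_of_card_le (by simpa using hcard)
      set w' : Fin (d + 1) → ℝ := Function.extend e w 0 with hw'
      set z' : Fin (d + 1) → (Fin d → ℝ) := Function.extend e z (fun _ => z0) with hz'
      refine ⟨⟨w', z'⟩, ⟨⟨?_, ?_⟩, ?_⟩, ?_⟩
      · intro j
        show 0 ≤ w' j
        by_cases h : ∃ i, e i = j
        · obtain ⟨i, rfl⟩ := h
          rw [hw', e.injective.extend_apply]
          exact (hwpos i).le
        · rw [hw', Function.extend_apply' _ _ _ h]
          exact le_refl _
      · show ∑ j, w' j = 1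
        rw [hw', sum_extend_emb e w]
        exact hw1
      · intro j _
        show z' j ∈ s
        by_cases h : ∃ i, e i = j
        · obtain ⟨i, rfl⟩ := h
          rw [hz', e.injective.extend_apply]
          exact hrange (Set.mem_range_self i)
        · rw [hz', Function.extend_apply' _ _ _ h]
          exact hz0
      · have hptwise : ∀ j, w' j • z' j = Function.extend e (fun i => w i • z i) 0 j := by
          intro j
          by_cases h : ∃ i, e i = j
          · obtain ⟨i, rfl⟩ := h
            simp only [hw', hz', e.injective.extend_apply]
          · simp only [hw', hz', Function.extend_apply' _ _ _ h, Pi.zero_apply, zero_smul]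
        show ∑ j, w' j • z' j = x
        calc ∑ j, w' j • z' j = ∑ j, Function.extend e (fun i => w i • z i) 0 j :=
              Finset.sum_congr rfl fun j _ => hptwise j
          _ = ∑ i, w i • z i := sum_extend_emb e _
          _ = x := hsum
    · rintro _ ⟨⟨w, z⟩, ⟨hw, hz⟩, rfl⟩
      have h1 : Finset.univ.centerMass w z ∈ convexHull ℝ s := by
        apply Finset.centerMass_mem_convexHull
        · intro i _; exact hw.1 i
        · rw [hw.2]; norm_num
        · intro i _; exact hz i (Set.mem_univ i)
      rwa [Finset.centerMass_eq_of_sum_1 _ _ hw.2] at h1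
  rw [himg]
  exact hD.image hgc

private noncomputable def evalLM {n : ℕ} (H : Submodule ℝ (MvPolynomial (Fin n) ℝ)) (x : Fin n → ℝ) :
    H →ₗ[ℝ] ℝ where
  toFun p := eval x (p : MvPolynomial (Fin n) ℝ)
  map_add' p q := by simp
  map_smul' c p := by simp [MvPolynomial.smul_eval]

private lemma evalLM_apply {n : ℕ} (H : Submodule ℝ (MvPolynomial (Fin n) ℝ)) (x : Fin n → ℝ)
    (p : H) : evalLM H x p = eval x (p : MvPolynomial (Fin n) ℝ) := rfl

private lemma sum_repr_mul {n : ℕ} {H : Submodule ℝ (MvPolynomial (Fin n) ℝ)}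
    [FiniteDimensional ℝ H] (b : Basis (Fin (finrank ℝ H)) ℝ H) (T : H →ₗ[ℝ] ℝ) (p : H) :
    T p = ∑ i, b.repr p i * T (b i) := by
  conv_lhs => rw [← b.sum_repr p]
  rw [map_sum]
  exact Finset.sum_congr rfl fun i _ => by rw [map_smul, smul_eq_mul]

private lemma L_eq_zero {n : ℕ} {H : Submodule ℝ (MvPolynomial (Fin n) ℝ)}
    (K : Set (Fin n → ℝ)) (hK : IsCompact K)
    (f : MvPolynomial (Fin n) ℝ) (hfH : f ∈ H) (hfpos : ∀ x ∈ K, 0 < eval x f)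
    (L : H →ₗ[ℝ] ℝ)
    (hL : ∀ p : H, (∀ x ∈ K, 0 ≤ eval x (p : MvPolynomial (Fin n) ℝ)) → 0 ≤ L p)
    (hLf : L ⟨f, hfH⟩ = 0) (p : H) : L p = 0 := by
  classical
  set fH : H := ⟨f, hfH⟩ with hfHdef
  obtain ⟨C, hC⟩ := hK.exists_bound_of_continuousOn
    (f := fun x => (eval x f)⁻¹ * eval x (p : MvPolynomial (Fin n) ℝ))
    (((MvPolynomial.continuous_eval f).continuousOn.inv₀
        fun x hx => (hfpos x hx).ne').mul
      (MvPolynomial.continuous_eval _).continuousOn)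
  have hbound : ∀ x ∈ K, |eval x (p : MvPolynomial (Fin n) ℝ)| ≤ C * eval x f := by
    intro x hx
    have h1 := hC x hx
    rw [Real.norm_eq_abs, abs_mul, abs_inv] at h1
    have hfx := hfpos x hx
    have h2 : |eval x f| = eval x f := abs_of_pos hfx
    rw [h2] at h1
    have h3 := mul_le_mul_of_nonneg_left h1 hfx.le
    rw [mul_inv_cancel_left₀ hfx.ne'] at h3
    linarith
  have h1 : 0 ≤ L (C • fH - p) := by
    apply hL
    intro x hx
    have : eval x ((C • fH - p : H) : MvPolynomial (Fin n) ℝ)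
        = C * eval x f - eval x (p : MvPolynomial (Fin n) ℝ) := by
      rw [← evalLM_apply, map_sub, map_smul, evalLM_apply, evalLM_apply, smul_eq_mul]
    rw [this]
    linarith [(abs_le.mp (hbound x hx)).2]
  have h2 : 0 ≤ L (C • fH + p) := by
    apply hL
    intro x hx
    have : eval x ((C • fH + p : H) : MvPolynomial (Fin n) ℝ)
        = C * eval x f + eval x (p : MvPolynomial (Fin n) ℝ) := by
      rw [← evalLM_apply, map_add, map_smul, evalLM_apply, evalLM_apply, smul_eq_mul]
    rw [this]
    linarith [(abs_le.mp (hbound x hx)).1]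
  rw [map_sub, map_smul, hLf, smul_eq_mul, mul_zero, zero_sub] at h1
  rw [map_add, map_smul, hLf, smul_eq_mul, mul_zero, zero_add] at h2
  linarith

/-- if `K ⊆ ℝ^n` is compact and `H` is a finite-dimensional subspace of `ℝ[x]`
containing a polynomial strictly positive on `K`, then every `K`-positive linear functional
`L : H → ℝ` is finitely atomically representable with at most `dim H` atoms in `K` and
positive weights. -/
theorem stmt2 {n : ℕ} (K : Set (Fin n → ℝ)) (hK : IsCompact K)
    (H : Submodule ℝ (MvPolynomial (Fin n) ℝ)) [FiniteDimensional ℝ H]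
    (f : MvPolynomial (Fin n) ℝ) (hfH : f ∈ H) (hfpos : ∀ x ∈ K, 0 < eval x f)
    (L : H →ₗ[ℝ] ℝ)
    (hL : ∀ p : H, (∀ x ∈ K, 0 ≤ eval x (p : MvPolynomial (Fin n) ℝ)) → 0 ≤ L p) :
    ∃ m : ℕ, m ≤ Module.finrank ℝ H ∧
      ∃ (u : Fin m → (Fin n → ℝ)) (lam : Fin m → ℝ),
        (∀ i, u i ∈ K ∧ 0 < lam i) ∧
        ∀ p : H, L p = ∑ i, lam i * eval (u i) (p : MvPolynomial (Fin n) ℝ) := by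
  classical
  set d := Module.finrank ℝ H with hd
  set fH : H := ⟨f, hfH⟩ with hfHdef
  have hLf0 : 0 ≤ L fH := hL fH fun x hx => (hfpos x hx).le
  rcases eq_or_lt_of_le hLf0 with hLf | hLf
  · -- L vanishes identically
    refine ⟨0, Nat.zero_le _, Fin.elim0, Fin.elim0, fun i => i.elim0, fun p => ?_⟩
    rw [L_eq_zero K hK f hfH hfpos L hL hLf.symm p]
    simp
  · -- main case
    have hKne : K.Nonempty := by
      rcases Set.eq_empty_or_nonempty K with h | h
      · exfalso
        have h0 : 0 ≤ L (-fH) := by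
          apply hL
          intro x hx
          rw [h] at hx
          exact absurd hx (Set.notMem_empty x)
        rw [map_neg] at h0
        linarith
      · exact h
    obtain ⟨x0, hx0⟩ := hKne
    let b : Basis (Fin d) ℝ H := Module.finBasis ℝ H
    have hfH0 : fH ≠ 0 := by
      intro h
      have h2 := hfpos x0 hx0
      have h3 : f = 0 := congrArg Subtype.val h
      rw [h3] at h2
      simp at h2
    set Φ : (Fin n → ℝ) → (Fin d → ℝ) :=
      fun x i => (eval x f)⁻¹ * eval x ((b i : H) : MvPolynomial (Fin n) ℝ) with hΦ
    have hΦcont : ContinuousOn Φ K := by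
      rw [continuousOn_pi]
      intro i
      exact ((MvPolynomial.continuous_eval f).continuousOn.inv₀
        fun x hx => (hfpos x hx).ne').mul (MvPolynomial.continuous_eval _).continuousOn
    set S := Φ '' K with hS
    have hScomp : IsCompact S := hK.image_of_continuousOn hΦcont
    have hhull := (isCompact_convexHull_aux hScomp).isClosed
    set v : Fin d → ℝ := fun i => (L fH)⁻¹ * L (b i) with hv
    have hvmem : v ∈ convexHull ℝ S := by
      by_contra hvn
      obtain ⟨g, u, hgv, hgS⟩ :=
        geometric_hahn_banach_point_closed (convex_convexHull ℝ S) hhull hvn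
      set a : Fin d → ℝ := fun i => g (fun j => if i = j then (1 : ℝ) else 0) with ha
      have hgy : ∀ y : Fin d → ℝ, g y = ∑ i, y i * a i := by
        intro y
        have h := LinearMap.pi_apply_eq_sum_univ (g : (Fin d → ℝ) →ₗ[ℝ] ℝ) y
        simpa [smul_eq_mul, ha] using h
      set q : H := (∑ i, a i • b i) - u • fH with hqdef
      have hqeval : ∀ x, eval x (q : MvPolynomial (Fin n) ℝ)
          = (∑ i, a i * eval x ((b i : H) : MvPolynomial (Fin n) ℝ)) - u * eval x f := by
        intro x
        rw [← evalLM_apply, hqdef, map_sub, map_sum, map_smul, smul_eq_mul]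
        congr 1
        exact Finset.sum_congr rfl fun i _ => by rw [map_smul, smul_eq_mul, evalLM_apply]
      have hq : ∀ x ∈ K, 0 ≤ eval x (q : MvPolynomial (Fin n) ℝ) := by
        intro x hx
        have hfx := hfpos x hx
        have hmem : Φ x ∈ convexHull ℝ S := subset_convexHull ℝ S ⟨x, hx, rfl⟩
        have h2 := hgS _ hmem
        rw [hgy] at h2
        have h3 : u * eval x f < ∑ i, a i * eval x ((b i : H) : MvPolynomial (Fin n) ℝ) := by
          have h4 := (mul_lt_mul_iff_right₀ hfx).2 h2
          have h5 : eval x f * ∑ i, Φ x i * a i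
              = ∑ i, a i * eval x ((b i : H) : MvPolynomial (Fin n) ℝ) := by
            rw [Finset.mul_sum]
            refine Finset.sum_congr rfl fun i _ => ?_
            show eval x f * ((eval x f)⁻¹ * eval x ((b i : H) : MvPolynomial (Fin n) ℝ) * a i) = _
            field_simp
          rw [h5] at h4
          linarith [h4]
        rw [hqeval x]
        linarith
      have h0 := hL q hq
      have hLq : L q = (∑ i, a i * L (b i)) - u * L fH := by
        rw [hqdef, map_sub, map_sum, map_smul, smul_eq_mul]
        congr 1
        exact Finset.sum_congr rfl fun i _ => by rw [map_smul, smul_eq_mul]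
      rw [hLq] at h0
      have hgv2 : g v = (L fH)⁻¹ * ∑ i, a i * L (b i) := by
        rw [hgy, Finset.mul_sum]
        refine Finset.sum_congr rfl fun i _ => ?_
        show (L fH)⁻¹ * L (b i) * a i = (L fH)⁻¹ * (a i * L (b i))
        ring
      have hcontr : u ≤ g v := by
        rw [hgv2]
        have hA : u * L fH ≤ ∑ i, a i * L (b i) := by linarith
        calc u = (L fH)⁻¹ * (u * L fH) := by field_simp
          _ ≤ (L fH)⁻¹ * ∑ i, a i * L (b i) :=
              mul_le_mul_of_nonneg_left hA (inv_pos.2 hLf).le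
      linarith
    obtain ⟨ι, hι, z, w, hrange, hAI, hwpos, hw1, hsum⟩ :=
      eq_pos_convex_span_of_mem_convexHull hvmem
    letI := hι
    -- the hyperplane functional
    set ψ : (Fin d → ℝ) →ₗ[ℝ] ℝ := ∑ i, b.repr fH i • LinearMap.proj i with hψ
    have hψapp : ∀ y : Fin d → ℝ, ψ y = ∑ i, b.repr fH i * y i := by
      intro y
      rw [hψ]
      simp [LinearMap.sum_apply, LinearMap.smul_apply, LinearMap.proj_apply, smul_eq_mul]
    have hevalrep : ∀ (x : Fin n → ℝ) (p : H), eval x (p : MvPolynomial (Fin n) ℝ)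
        = ∑ i, b.repr p i * eval x ((b i : H) : MvPolynomial (Fin n) ℝ) := by
      intro x p
      have := sum_repr_mul b (evalLM H x) p
      simpa [evalLM_apply] using this
    have hψS : ∀ y ∈ S, ψ y = 1 := by
      rintro _ ⟨x, hx, rfl⟩
      rw [hψapp]
      have hfx := hfpos x hx
      have h5 : ∑ i, b.repr fH i * Φ x i
          = (eval x f)⁻¹ * ∑ i, b.repr fH i * eval x ((b i : H) : MvPolynomial (Fin n) ℝ) := by
        rw [Finset.mul_sum]
        refine Finset.sum_congr rfl fun i _ => ?_
        show b.repr fH i * ((eval x f)⁻¹ * eval x ((b i : H) : MvPolynomial (Fin n) ℝ)) = _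
        ring
      have h6 : eval x ((fH : H) : MvPolynomial (Fin n) ℝ)
          = ∑ i, b.repr fH i * eval x ((b i : H) : MvPolynomial (Fin n) ℝ) := hevalrep x fH
      rw [h5, ← h6]
      exact inv_mul_cancel₀ hfx.ne'
    have hψne : ψ ≠ 0 := by
      have hrepr : b.repr fH ≠ 0 := by
        intro h
        exact hfH0 (by simpa using congrArg b.repr.symm h)
      obtain ⟨i, hi⟩ : ∃ i, b.repr fH i ≠ 0 := by
        by_contra hcon
        push_neg at hcon
        exact hrepr (Finsupp.ext hcon)
      intro h
      have h7 := hψapp (fun j => if i = j then (1 : ℝ) else 0)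
      rw [h] at h7
      simp at h7
      exact hi h7.symm
    have hr1 : finrank ℝ (LinearMap.range ψ) = 1 := by
      have hle : finrank ℝ (LinearMap.range ψ) ≤ 1 := by
        simpa using Submodule.finrank_le (LinearMap.range ψ)
      have hne : LinearMap.range ψ ≠ ⊥ := by
        rwa [ne_eq, LinearMap.range_eq_bot]
      have hpos : 0 < finrank ℝ (LinearMap.range ψ) := by
        rcases Nat.eq_zero_or_pos (finrank ℝ (LinearMap.range ψ)) with h | h
        · exact absurd (Submodule.finrank_eq_zero.mp h) hne
        · exact h
      omega
    have hker : finrank ℝ (LinearMap.ker ψ) + 1 = d := by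
      have h8 := LinearMap.finrank_range_add_finrank_ker ψ
      rw [hr1, Module.finrank_fin_fun] at h8
      omega
    have hcard : Fintype.card ι ≤ d := by
      cases isEmpty_or_nonempty ι
      · rw [Fintype.card_eq_zero]
        exact Nat.zero_le _
      · have h1 := hAI.finrank_vectorSpan_add_one
        have hsub : vectorSpan ℝ (Set.range z) ≤ LinearMap.ker ψ := by
          rw [vectorSpan_def, Submodule.span_le]
          rintro y ⟨y1, hy1, y2, hy2, rfl⟩
          have e1 := hψS _ (hrange hy1)
          have e2 := hψS _ (hrange hy2)
          simp [LinearMap.mem_ker, vsub_eq_sub, map_sub, e1, e2]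
        have h2 := Submodule.finrank_mono hsub
        omega
    have hxj : ∀ i : ι, ∃ x, x ∈ K ∧ Φ x = z i := by
      intro i
      obtain ⟨x, hx, hΦx⟩ := hrange (Set.mem_range_self i)
      exact ⟨x, hx, hΦx⟩
    choose xx hxxK hxxΦ using hxj
    let ε : Fin (Fintype.card ι) ≃ ι := (Fintype.equivFin ι).symm
    refine ⟨Fintype.card ι, hcard, fun j => xx (ε j),
      fun j => L fH * w (ε j) * (eval (xx (ε j)) f)⁻¹, fun j => ⟨hxxK _, ?_⟩, fun p => ?_⟩
    · exact mul_pos (mul_pos hLf (hwpos _)) (inv_pos.2 (hfpos _ (hxxK _)))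
    · have e2 : ∀ i, L (b i) = L fH * v i := by
        intro i
        rw [hv]
        show L (b i) = L fH * ((L fH)⁻¹ * L (b i))
        rw [mul_inv_cancel_left₀ hLf.ne']
      have e3 : ∀ i, v i = ∑ jj, w jj * z jj i := by
        intro i
        rw [← hsum]
        simp [Finset.sum_apply]
      have e4 : ∀ (jj : ι) i, z jj i
          = (eval (xx jj) f)⁻¹ * eval (xx jj) ((b i : H) : MvPolynomial (Fin n) ℝ) := by
        intro jj i
        rw [← hxxΦ jj]
      have main : L p = ∑ jj : ι,
          L fH * w jj * (eval (xx jj) f)⁻¹ * eval (xx jj) (p : MvPolynomial (Fin n) ℝ) := by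
        rw [sum_repr_mul b L p]
        have step : ∀ i, b.repr p i * L (b i) = ∑ jj : ι,
            L fH * w jj * (eval (xx jj) f)⁻¹
              * (b.repr p i * eval (xx jj) ((b i : H) : MvPolynomial (Fin n) ℝ)) := by
          intro i
          rw [e2 i, e3 i, Finset.mul_sum, Finset.mul_sum]
          refine Finset.sum_congr rfl fun jj _ => ?_
          rw [e4]
          ring
        rw [Finset.sum_congr rfl fun i _ => step i, Finset.sum_comm]
        refine Finset.sum_congr rfl fun jj _ => ?_
        rw [← Finset.mul_sum, ← hevalrep (xx jj) p]
      rw [main, ← Equiv.sum_comp ε (fun jj =>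
        L fH * w jj * (eval (xx jj) f)⁻¹ * eval (xx jj) (p : MvPolynomial (Fin n) ℝ))]
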